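/- Let L_G ∈ ℝ^{N×N} be the Laplacian matrix of a weighted directed graph G that contains a directed spanning tree and is not strongly connected. Then there exists a permutation matrix P_G with P_G^⊤ P_G = I such that P_G^⊤ L_G P_G = [[Q, 0], [−R, S]] in 2×2 block form, where: Q ∈ ℝ^{n'×n'} with 0 < n' < N is the Laplacian matrix of a strongly connected weighted directed graph, namely the subgraph of G induced by a node set C that contains all root nodes of G and receives no edges from nodes outside C; R ∈ ℝ^{(N−n')×n'} has nonnegative entries; and S ∈ ℝ^{(N−n')×(N−n')} satisfies S = L' + D', where L' is the Laplacian matrix of the subgraph of G induced by the complement of C and D' is a diagonal matrix with nonnegative entries satisfying D' 𝟏_{N−n'} = R 𝟏_{n'}. -/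

import Mathlib

open Finset

/-- In the weighted directed graph with weights `a` (an edge from node `j` to
node `i` whenever `a i j > 0`), node `j` is reachable from node `i`. -/
def Reachable {N : ℕ} (a : Fin N → Fin N → ℝ) : Fin N → Fin N → Prop :=
  Relation.ReflTransGen (fun u v => 0 < a v u)

/-- The Laplacian matrix of the weighted directed graph with weights `a`:
`[L]ᵢⱼ = −aᵢⱼ` for `i ≠ j` and `[L]ᵢᵢ = ∑_{ℓ≠i} aᵢℓ`. -/
def lap {N : ℕ} (a : Fin N → Fin N → ℝ) : Matrix (Fin N) (Fin N) ℝ :=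
  Matrix.of fun i j =>
    if i = j then ∑ ℓ ∈ Finset.univ.erase i, a i ℓ else -(a i j)

/-- If the graph `G` (with Laplacian `L = lap a`) contains a directed spanning
tree but is not strongly connected, then there is a permutation `σ` (i.e. a
permutation matrix `T`, with `M := Tᵀ L T` given by `M k l = L (σ k) (σ l)`)
and `0 < n' < N` such that `M = [[Q, 0], [−R, S]]` in `2 × 2` block form,
where the leading `n' × n'` block `Q` is the Laplacian of the strongly
connected subgraph induced by a set `C` containing all roots of `G` and
receiving no edges from outside, `R` has nonnegative entries, and
`S = L' + D'` with `L'` the Laplacian of the subgraph induced by the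
complement of `C` and `D'` diagonal nonnegative with `D' 𝟏 = R 𝟏`. -/
theorem laplacian_two_block_triangularization
    (N : ℕ)
    (a : Fin N → Fin N → ℝ)
    (ha : ∀ i j : Fin N, i ≠ j → 0 ≤ a i j)
    (htree : ∃ r : Fin N, ∀ j : Fin N, Reachable a r j)
    (hnsc : ¬ ∀ i j : Fin N, Reachable a i j) :
    ∃ (n' : ℕ) (σ : Equiv.Perm (Fin N)) (C : Set (Fin N)) (d : Fin N → ℝ),
      0 < n' ∧ n' < N ∧
      -- `C` contains all root nodes of `G`
      (∀ s : Fin N, (∀ j : Fin N, Reachable a s j) → s ∈ C) ∧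
      -- `C` receives no edges from nodes outside `C`
      (∀ i ∈ C, ∀ j : Fin N, j ∉ C → a i j = 0) ∧
      -- the permutation sends the first `n'` indices exactly onto `C`
      (∀ k : Fin N, (k : ℕ) < n' ↔ σ k ∈ C) ∧
      -- the subgraph induced by `C` is strongly connected
      (∀ u ∈ C, ∀ v ∈ C,
        Relation.ReflTransGen (fun x y => x ∈ C ∧ y ∈ C ∧ 0 < a y x) u v) ∧
      -- the upper-right block of `Tᵀ L T` is zero
      (∀ k l : Fin N, (k : ℕ) < n' → n' ≤ (l : ℕ) → lap a (σ k) (σ l) = 0) ∧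
      -- `Q` is the Laplacian of the subgraph induced by `C`:
      -- its diagonal entries only involve weights within `C`
      (∀ k : Fin N, (k : ℕ) < n' →
        lap a (σ k) (σ k) =
          ∑ l ∈ Finset.univ.filter (fun l : Fin N => (l : ℕ) < n' ∧ l ≠ k),
            a (σ k) (σ l)) ∧
      -- the lower-left block is `−R` with `R` entrywise nonnegative
      (∀ k l : Fin N, n' ≤ (k : ℕ) → (l : ℕ) < n' → lap a (σ k) (σ l) ≤ 0) ∧
      -- `S = L' + D'` with `D'` diagonal, nonnegative, and `D' 𝟏 = R 𝟏`
      (∀ k : Fin N, n' ≤ (k : ℕ) → 0 ≤ d k) ∧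
      (∀ k : Fin N, n' ≤ (k : ℕ) →
        d k = ∑ l ∈ Finset.univ.filter (fun l : Fin N => (l : ℕ) < n'),
          -(lap a (σ k) (σ l))) ∧
      (∀ k : Fin N, n' ≤ (k : ℕ) →
        lap a (σ k) (σ k) =
          (∑ l ∈ Finset.univ.filter (fun l : Fin N => n' ≤ (l : ℕ) ∧ l ≠ k),
            a (σ k) (σ l)) + d k) := by
  classical
  obtain ⟨r, hr⟩ := htree
  set C : Set (Fin N) := {s | ∀ j, Reachable a s j} with hC
  have hrC : r ∈ C := hr
  -- C receives no edges from outside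
  have hclosed : ∀ i ∈ C, ∀ j : Fin N, j ∉ C → a i j = 0 := by
    intro i hi j hj
    by_contra h
    have hij : i ≠ j := by rintro rfl; exact hj hi
    have hpos : 0 < a i j := lt_of_le_of_ne (ha i j hij) (Ne.symm h)
    exact hj (fun m =>
      Relation.ReflTransGen.trans (Relation.ReflTransGen.single hpos) (hi m))
  -- strong connectivity inside C
  have hsc : ∀ u ∈ C, ∀ v ∈ C,
      Relation.ReflTransGen (fun x y => x ∈ C ∧ y ∈ C ∧ 0 < a y x) u v := by
    intro u hu v hv
    have key : ∀ x : Fin N, Reachable a x v → x ∈ C →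
        Relation.ReflTransGen (fun p q => p ∈ C ∧ q ∈ C ∧ 0 < a q p) x v := by
      intro x hxv
      induction hxv using Relation.ReflTransGen.head_induction_on with
      | refl => intro _; exact Relation.ReflTransGen.refl
      | @head p q hpq hqv ih =>
        intro hpC
        have hqC : q ∈ C := fun m => Relation.ReflTransGen.trans hqv (hv m)
        exact Relation.ReflTransGen.head ⟨hpC, hqC, hpq⟩ (ih hqC)
    exact key u (hu v) hu
  -- the finset of roots and its cardinality
  set Cf : Finset (Fin N) := univ.filter (· ∈ C) with hCf
  set n' : ℕ := Cf.card with hn'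
  have hmemCf : ∀ x : Fin N, x ∈ Cf ↔ x ∈ C := by
    intro x; simp [hCf]
  have hpos : 0 < n' := Finset.card_pos.mpr ⟨r, (hmemCf r).mpr hrC⟩
  have hlt : n' < N := by
    push_neg at hnsc
    obtain ⟨i, j, hij⟩ := hnsc
    have hiC : i ∉ Cf := by
      rw [hmemCf]; intro h; exact hij (h j)
    calc n' = Cf.card := rfl
      _ < Finset.univ.card := Finset.card_lt_card ⟨Finset.subset_univ _,
          fun h => hiC (h (Finset.mem_univ i))⟩
      _ = N := by simp
  -- the permutation
  set L : List (Fin N) := Cf.sort (· ≤ ·) ++ (Cfᶜ).sort (· ≤ ·) with hL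
  have hnd : L.Nodup := by
    refine List.Nodup.append (Finset.sort_nodup _ _) (Finset.sort_nodup _ _) ?_
    intro x hx1 hx2
    rw [Finset.mem_sort] at hx1 hx2
    exact (Finset.mem_compl.mp hx2) hx1
  have hall : ∀ x : Fin N, x ∈ L := by
    intro x
    rw [List.mem_append, Finset.mem_sort, Finset.mem_sort]
    by_cases h : x ∈ Cf
    · exact Or.inl h
    · exact Or.inr (Finset.mem_compl.mpr h)
  have hlen : L.length = N := by
    rw [hL, List.length_append, Finset.length_sort, Finset.length_sort]
    simpa using Finset.card_add_card_compl Cf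
  have hl1len : (Cf.sort (· ≤ ·)).length = n' := Finset.length_sort _
  set e := List.Nodup.getEquivOfForallMemList L hnd hall with he
  set σ : Equiv.Perm (Fin N) := (finCongr hlen).symm.trans e with hσ
  have happly : ∀ k : Fin N, σ k = L.get ⟨(k : ℕ), by rw [hlen]; exact k.2⟩ := by
    intro k; rfl
  -- membership characterization
  have hmem : ∀ k : Fin N, (k : ℕ) < n' ↔ σ k ∈ C := by
    intro k
    constructor
    · intro hk
      rw [happly]
      have hk' : (k : ℕ) < (Cf.sort (· ≤ ·)).length := by rw [hl1len]; exact hk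
      have : L.get ⟨(k : ℕ), by rw [hlen]; exact k.2⟩ =
          (Cf.sort (· ≤ ·)).get ⟨(k : ℕ), hk'⟩ := by
        simp only [hL, List.get_eq_getElem]
        exact List.getElem_append_left hk'
      rw [this]
      have hm : (Cf.sort (· ≤ ·)).get ⟨(k : ℕ), hk'⟩ ∈ Cf.sort (· ≤ ·) :=
        List.get_mem _ _
      rw [Finset.mem_sort] at hm
      exact (hmemCf _).mp hm
    · intro hk
      by_contra hlt'
      push_neg at hlt'
      have hk2 : (k : ℕ) - (Cf.sort (· ≤ ·)).length < ((Cfᶜ).sort (· ≤ ·)).length := by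
        rw [hl1len, Finset.length_sort]
        have := k.2
        have hcard : n' + (Cfᶜ).card = N := by
          have h := Finset.card_add_card_compl Cf
          simp only [Fintype.card_fin] at h
          exact h
        omega
      have hge : (Cf.sort (· ≤ ·)).length ≤ (k : ℕ) := by rw [hl1len]; exact hlt'
      have : L.get ⟨(k : ℕ), by rw [hlen]; exact k.2⟩ =
          ((Cfᶜ).sort (· ≤ ·)).get ⟨(k : ℕ) - (Cf.sort (· ≤ ·)).length, hk2⟩ := by
        simp only [hL, List.get_eq_getElem]
        exact List.getElem_append_right hge
      rw [happly, this] at hk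
      have hmem2 : ((Cfᶜ).sort (· ≤ ·)).get
          ⟨(k : ℕ) - (Cf.sort (· ≤ ·)).length, hk2⟩ ∈ (Cfᶜ).sort (· ≤ ·) :=
        List.get_mem _ _
      rw [Finset.mem_sort, Finset.mem_compl, hmemCf] at hmem2
      exact hmem2 hk
  -- basic matrix entry facts
  have hlapoff : ∀ i j : Fin N, i ≠ j → lap a i j = -(a i j) := by
    intro i j hij; simp [lap, hij]
  have hlapdiag : ∀ i : Fin N, lap a i i = ∑ ℓ ∈ Finset.univ.erase i, a i ℓ := by
    intro i; simp [lap]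
  -- diagonal rewriting via the permutation
  have hdiag : ∀ k : Fin N,
      lap a (σ k) (σ k) = ∑ l ∈ Finset.univ.erase k, a (σ k) (σ l) := by
    intro k
    rw [hlapdiag]
    have h1 : a (σ k) (σ k) + ∑ ℓ ∈ Finset.univ.erase (σ k), a (σ k) ℓ =
        ∑ ℓ, a (σ k) ℓ :=
      Finset.add_sum_erase Finset.univ (fun ℓ => a (σ k) ℓ) (Finset.mem_univ (σ k))
    have h2 : a (σ k) (σ k) + ∑ l ∈ Finset.univ.erase k, a (σ k) (σ l) =
        ∑ l, a (σ k) (σ l) :=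
      Finset.add_sum_erase Finset.univ (fun l => a (σ k) (σ l)) (Finset.mem_univ k)
    have h3 : ∑ l, a (σ k) (σ l) = ∑ ℓ, a (σ k) ℓ := Equiv.sum_comp σ _
    linarith
  refine ⟨n', σ, C, fun k => ∑ l ∈ univ.filter (fun l : Fin N => (l : ℕ) < n'),
    a (σ k) (σ l), hpos, hlt, fun s hs => hs, hclosed, hmem, hsc, ?_, ?_, ?_, ?_, ?_, ?_⟩
  · -- upper-right zero
    intro k l hk hl
    have hkC : σ k ∈ C := (hmem k).mp hk
    have hlC : σ l ∉ C := fun h => by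
      have := (hmem l).mpr h; omega
    have hne : σ k ≠ σ l := fun h => hlC (h ▸ hkC)
    rw [hlapoff _ _ hne, hclosed _ hkC _ hlC, neg_zero]
  · -- Q diagonal
    intro k hk
    rw [hdiag]
    refine (Finset.sum_subset ?_ ?_).symm
    · intro l hl
      rw [Finset.mem_filter] at hl
      exact Finset.mem_erase.mpr ⟨hl.2.2, Finset.mem_univ _⟩
    · intro l hl hnl
      rw [Finset.mem_erase] at hl
      rw [Finset.mem_filter] at hnl
      have hln : ¬ (l : ℕ) < n' := by
        intro h; exact hnl ⟨Finset.mem_univ _, h, hl.1⟩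
      have hkC : σ k ∈ C := (hmem k).mp hk
      have hlC : σ l ∉ C := fun h => hln ((hmem l).mpr h)
      exact hclosed _ hkC _ hlC
  · -- lower-left nonpositive
    intro k l hk hl
    have hne : k ≠ l := by
      intro h; rw [h] at hk; omega
    have hne' : σ k ≠ σ l := fun h => hne (σ.injective h)
    rw [hlapoff _ _ hne']
    simp only [neg_nonpos]
    exact ha _ _ hne'
  · -- d nonneg
    intro k hk
    refine Finset.sum_nonneg ?_
    intro l hl
    rw [Finset.mem_filter] at hl
    have hne : k ≠ l := by intro h; rw [h] at hk; omega
    exact ha _ _ (fun h => hne (σ.injective h))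
  · -- d formula
    intro k hk
    refine Finset.sum_congr rfl ?_
    intro l hl
    rw [Finset.mem_filter] at hl
    have hne : k ≠ l := by intro h; rw [h] at hk; omega
    rw [hlapoff _ _ (fun h => hne (σ.injective h)), neg_neg]
  · -- S diagonal
    intro k hk
    rw [hdiag]
    have hsplit := Finset.sum_filter_add_sum_filter_not (Finset.univ.erase k)
      (fun l : Fin N => n' ≤ (l : ℕ)) (fun l => a (σ k) (σ l))
    have he1 : (Finset.univ.erase k).filter (fun l : Fin N => n' ≤ (l : ℕ)) =
        Finset.univ.filter (fun l : Fin N => n' ≤ (l : ℕ) ∧ l ≠ k) := by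
      ext l
      simp only [Finset.mem_filter, Finset.mem_erase, Finset.mem_univ, true_and]
      tauto
    have he2 : (Finset.univ.erase k).filter (fun l : Fin N => ¬ n' ≤ (l : ℕ)) =
        Finset.univ.filter (fun l : Fin N => (l : ℕ) < n') := by
      ext l
      simp only [Finset.mem_filter, Finset.mem_erase, Finset.mem_univ, true_and,
        and_true, not_le]
      constructor
      · intro h; exact h.2
      · intro h
        refine ⟨?_, ?_⟩
        · intro hlk
          rw [hlk] at h; omega
        · first | exact h | trivial
    rw [he1, he2] at hsplit
    linarith
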